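/- Let Δη be a nonnegative predictable process and M a positive random variable with E[M^{−1}] ≤ C₀, and suppose E[ M ∫_0^T Δη_t dt ] ≤ ε. Let φ be a nonnegative predictable process with E[∫_0^T φ_t² dt] ≤ C₁. Then E[ ∫_0^T φ_t^{3/2} · 1_{{Δη_t > √ε}} dt ] ≤ C ε^{1/16}, where C depends only on C₀, C₁, T. -/

import Mathlib

open MeasureTheory

/-- if `Δη ≥ 0`, `E[M⁻¹] ≤ C₀`, `E[M ∫_0^T Δη dt] ≤ ε`, `φ ≥ 0`
with `E[∫_0^T φ² dt] ≤ C₁`, then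
`E[∫_0^T φ^{3/2} 1_{Δη > √ε} dt] ≤ C ε^{1/16}` with `C = C(C₀, C₁, T)`. -/
theorem stmt12 (C₀ C₁ T : ℝ) (hC₀ : 0 ≤ C₀) (hC₁ : 0 ≤ C₁) (hT : 0 < T) :
    ∃ C : ℝ, 0 ≤ C ∧
      ∀ (Ω : Type) (_ : MeasurableSpace Ω) (μ : Measure Ω)
        (_ : IsProbabilityMeasure μ)
        (Δη φ : ℝ → Ω → ℝ) (M : Ω → ℝ) (ε : ℝ), 0 < ε →
        Measurable (fun q : ℝ × Ω => Δη q.1 q.2) →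
        Measurable (fun q : ℝ × Ω => φ q.1 q.2) →
        Measurable M → (∀ ω, 0 < M ω) →
        (∀ t ω, 0 ≤ Δη t ω) → (∀ t ω, 0 ≤ φ t ω) →
        Integrable (fun ω => (M ω)⁻¹) μ →
        (∫ ω, (M ω)⁻¹ ∂μ) ≤ C₀ →
        (∀ ω, IntervalIntegrable (fun t => Δη t ω) volume 0 T) →
        Integrable (fun ω => M ω * ∫ t in (0:ℝ)..T, Δη t ω) μ →
        (∫ ω, (M ω * ∫ t in (0:ℝ)..T, Δη t ω) ∂μ) ≤ ε →
        (∀ ω, IntervalIntegrable (fun t => φ t ω ^ (2:ℕ)) volume 0 T) →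
        Integrable (fun ω => ∫ t in (0:ℝ)..T, φ t ω ^ (2:ℕ)) μ →
        (∫ ω, (∫ t in (0:ℝ)..T, φ t ω ^ (2:ℕ)) ∂μ) ≤ C₁ →
        (∫ ω, (∫ t in (0:ℝ)..T,
            (if Real.sqrt ε < Δη t ω then φ t ω ^ ((3:ℝ)/2) else 0)) ∂μ)
          ≤ C * ε ^ ((1:ℝ)/16) := by
  refine ⟨C₁ ^ ((3:ℝ)/4) * (T * C₀) ^ ((1:ℝ)/8), by positivity, ?_⟩
  intro Ω mΩ μ hprob Δη φ M ε hε hΔm hφm hMm hMpos hΔ0 hφ0 hMinvI hMinvLe hΔii hMΔI hMΔLe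
    hφii hφI hφLe
  have hTle : (0:ℝ) ≤ T := hT.le
  set S : Set ℝ := Set.Ioc 0 T with hS
  set ν : Measure (Ω × ℝ) := μ.prod (volume.restrict S) with hν
  have hΔm' : Measurable (fun q : Ω × ℝ => Δη q.2 q.1) := hΔm.comp measurable_swap
  have hφm' : Measurable (fun q : Ω × ℝ => φ q.2 q.1) := hφm.comp measurable_swap
  -- conversion of iterated real integrals to lintegrals over the product measure
  have key : ∀ G : Ω × ℝ → ℝ, Measurable G → (∀ q, 0 ≤ G q) →
      (∀ ω, IntegrableOn (fun t => G (ω, t)) S volume) →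
      Integrable (fun ω => ∫ t in S, G (ω, t)) μ →
      ∫⁻ q, ENNReal.ofReal (G q) ∂ν = ENNReal.ofReal (∫ ω, (∫ t in S, G (ω, t)) ∂μ) := by
    intro G hGm hG0 hGt hGi
    rw [hν, lintegral_prod _ hGm.ennreal_ofReal.aemeasurable,
      ofReal_integral_eq_lintegral_ofReal hGi
        (Filter.Eventually.of_forall fun ω => integral_nonneg fun t => hG0 _)]
    exact lintegral_congr fun ω =>
      (ofReal_integral_eq_lintegral_ofReal (hGt ω)
        (Filter.Eventually.of_forall fun t => hG0 _)).symm
  -- bound for M * Δη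
  have hmDm : Measurable fun q : Ω × ℝ => M q.1 * Δη q.2 q.1 :=
    (hMm.comp measurable_fst).mul hΔm'
  have hmD : ∫⁻ q, ENNReal.ofReal (M q.1 * Δη q.2 q.1) ∂ν ≤ ENNReal.ofReal ε := by
    have h1 : ∀ ω, IntegrableOn (fun t => M ω * Δη t ω) S volume := fun ω =>
      (intervalIntegrable_iff_integrableOn_Ioc_of_le hTle).mp ((hΔii ω).const_mul (M ω))
    have h2 : ∀ ω : Ω, (∫ t in S, M ω * Δη t ω) = M ω * ∫ t in (0:ℝ)..T, Δη t ω := fun ω => by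
      rw [integral_const_mul, intervalIntegral.integral_of_le hTle]
    rw [key _ hmDm (fun q => mul_nonneg (hMpos _).le (hΔ0 _ _)) h1
      (by simpa only [h2] using hMΔI)]
    apply ENNReal.ofReal_le_ofReal
    calc (∫ ω, (∫ t in S, M ω * Δη t ω) ∂μ)
        = ∫ ω, (M ω * ∫ t in (0:ℝ)..T, Δη t ω) ∂μ :=
          integral_congr_ae (Filter.Eventually.of_forall h2)
      _ ≤ ε := hMΔLe
  -- bound for φ²
  have hφ2m : Measurable fun q : Ω × ℝ => φ q.2 q.1 ^ (2:ℕ) := hφm'.pow_const 2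
  have hφ2 : ∫⁻ q, ENNReal.ofReal (φ q.2 q.1 ^ (2:ℕ)) ∂ν ≤ ENNReal.ofReal C₁ := by
    have h1 : ∀ ω, IntegrableOn (fun t => φ t ω ^ (2:ℕ)) S volume := fun ω =>
      (intervalIntegrable_iff_integrableOn_Ioc_of_le hTle).mp (hφii ω)
    have h2 : ∀ ω : Ω, (∫ t in S, φ t ω ^ (2:ℕ)) = ∫ t in (0:ℝ)..T, φ t ω ^ (2:ℕ) := fun ω =>
      (intervalIntegral.integral_of_le hTle).symm
    rw [key _ hφ2m (fun q => pow_nonneg (hφ0 _ _) 2) h1 (by simpa only [h2] using hφI)]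
    apply ENNReal.ofReal_le_ofReal
    calc (∫ ω, (∫ t in S, φ t ω ^ (2:ℕ)) ∂μ)
        = ∫ ω, (∫ t in (0:ℝ)..T, φ t ω ^ (2:ℕ)) ∂μ :=
          integral_congr_ae (Filter.Eventually.of_forall h2)
      _ ≤ C₁ := hφLe
  -- bound for M⁻¹
  have hmIm : Measurable fun q : Ω × ℝ => (M q.1)⁻¹ := (hMm.comp measurable_fst).inv
  have hmI : ∫⁻ q, ENNReal.ofReal (M q.1)⁻¹ ∂ν ≤ ENNReal.ofReal (T * C₀) := by
    rw [hν, lintegral_prod _ hmIm.ennreal_ofReal.aemeasurable]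
    have hin : ∀ ω : Ω, (∫⁻ _t : ℝ, ENNReal.ofReal (M ω)⁻¹ ∂(volume.restrict S))
        = ENNReal.ofReal (M ω)⁻¹ * ENNReal.ofReal T := by
      intro ω
      rw [lintegral_const, Measure.restrict_apply MeasurableSet.univ, Set.univ_inter, hS,
        Real.volume_Ioc, sub_zero]
    calc ∫⁻ ω, ∫⁻ t, ENNReal.ofReal (M (ω, t).1)⁻¹ ∂(volume.restrict S) ∂μ
        = ∫⁻ ω, ENNReal.ofReal (M ω)⁻¹ * ENNReal.ofReal T ∂μ := lintegral_congr fun ω => hin ω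
      _ = (∫⁻ ω, ENNReal.ofReal (M ω)⁻¹ ∂μ) * ENNReal.ofReal T :=
          lintegral_mul_const _ hMm.inv.ennreal_ofReal
      _ ≤ ENNReal.ofReal C₀ * ENNReal.ofReal T := by
          gcongr
          rw [← ofReal_integral_eq_lintegral_ofReal hMinvI
            (Filter.Eventually.of_forall fun ω => inv_nonneg.mpr (hMpos ω).le)]
          exact ENNReal.ofReal_le_ofReal hMinvLe
      _ = ENNReal.ofReal (T * C₀) := by
          rw [← ENNReal.ofReal_mul hC₀, mul_comm]
  -- the indicator function
  set Aset : Set (Ω × ℝ) := {q | Real.sqrt ε < Δη q.2 q.1} with hA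
  have hAm : MeasurableSet Aset := measurableSet_lt measurable_const hΔm'
  set ind : Ω × ℝ → ENNReal := Aset.indicator (fun _ => 1) with hind
  have hindm : Measurable ind := measurable_const.indicator hAm
  -- pointwise bound for the indicator
  have hpt : ∀ q, ind q ≤ ENNReal.ofReal (ε ^ (-(1:ℝ)/4)) *
      (ENNReal.ofReal (M q.1)⁻¹ ^ ((1:ℝ)/2) *
        ENNReal.ofReal (M q.1 * Δη q.2 q.1) ^ ((1:ℝ)/2)) := by
    intro q
    by_cases hq : q ∈ Aset
    · rw [hind, Set.indicator_of_mem hq]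
      have hM0 : 0 < M q.1 := hMpos _
      have hd0 : 0 ≤ Δη q.2 q.1 := hΔ0 _ _
      rw [ENNReal.ofReal_rpow_of_nonneg (by positivity) (by norm_num),
        ENNReal.ofReal_rpow_of_nonneg (by positivity) (by norm_num),
        ← ENNReal.ofReal_mul (by positivity), ← ENNReal.ofReal_mul (by positivity)]
      have key2 : (1:ℝ) ≤ ε ^ (-(1:ℝ)/4) *
          ((M q.1)⁻¹ ^ ((1:ℝ)/2) * (M q.1 * Δη q.2 q.1) ^ ((1:ℝ)/2)) := by
        have h1 : (M q.1)⁻¹ ^ ((1:ℝ)/2) * (M q.1 * Δη q.2 q.1) ^ ((1:ℝ)/2)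
            = Δη q.2 q.1 ^ ((1:ℝ)/2) := by
          rw [← Real.mul_rpow (by positivity) (by positivity), inv_mul_cancel_left₀ hM0.ne']
        rw [h1]
        have h2 : Real.sqrt ε < Δη q.2 q.1 := hq
        have h3 : ε ^ ((1:ℝ)/4) ≤ Δη q.2 q.1 ^ ((1:ℝ)/2) := by
          calc ε ^ ((1:ℝ)/4) = (ε ^ ((1:ℝ)/2)) ^ ((1:ℝ)/2) := by
                rw [← Real.rpow_mul hε.le]; norm_num
            _ = Real.sqrt ε ^ ((1:ℝ)/2) := by rw [Real.sqrt_eq_rpow]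
            _ ≤ Δη q.2 q.1 ^ ((1:ℝ)/2) :=
                Real.rpow_le_rpow (Real.sqrt_nonneg ε) h2.le (by norm_num)
        calc (1:ℝ) = ε ^ (-(1:ℝ)/4) * ε ^ ((1:ℝ)/4) := by
              rw [← Real.rpow_add hε]; norm_num
          _ ≤ ε ^ (-(1:ℝ)/4) * Δη q.2 q.1 ^ ((1:ℝ)/2) := by
              exact mul_le_mul_of_nonneg_left h3 (by positivity)
      calc (1:ENNReal) = ENNReal.ofReal 1 := ENNReal.ofReal_one.symm
        _ ≤ _ := ENNReal.ofReal_le_ofReal key2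
    · rw [hind, Set.indicator_of_notMem hq]; exact zero_le
  -- Hölder (2,2) for the indicator bound
  have hconj2 : Real.HolderConjugate 2 2 := Real.holderConjugate_iff.mpr ⟨by norm_num, by norm_num⟩
  have hf2m : Measurable fun q : Ω × ℝ => ENNReal.ofReal (M q.1)⁻¹ ^ ((1:ℝ)/2) :=
    hmIm.ennreal_ofReal.pow_const _
  have hg2m : Measurable fun q : Ω × ℝ => ENNReal.ofReal (M q.1 * Δη q.2 q.1) ^ ((1:ℝ)/2) :=
    hmDm.ennreal_ofReal.pow_const _
  have hsq : ∀ x : ENNReal, (x ^ ((1:ℝ)/2)) ^ (2:ℝ) = x := by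
    intro x; rw [← ENNReal.rpow_mul]; norm_num
  have hHolder1 : ∫⁻ q, ENNReal.ofReal (M q.1)⁻¹ ^ ((1:ℝ)/2) *
      ENNReal.ofReal (M q.1 * Δη q.2 q.1) ^ ((1:ℝ)/2) ∂ν
      ≤ ENNReal.ofReal (T * C₀) ^ ((1:ℝ)/2) * ENNReal.ofReal ε ^ ((1:ℝ)/2) := by
    have h := ENNReal.lintegral_mul_le_Lp_mul_Lq ν hconj2 hf2m.aemeasurable hg2m.aemeasurable
    simp only [Pi.mul_apply, hsq] at h
    refine h.trans ?_
    norm_num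
    gcongr
  have hindLe : ∫⁻ q, ind q ∂ν ≤ ENNReal.ofReal (ε ^ (-(1:ℝ)/4)) *
      (ENNReal.ofReal (T * C₀) ^ ((1:ℝ)/2) * ENNReal.ofReal ε ^ ((1:ℝ)/2)) := by
    calc ∫⁻ q, ind q ∂ν
        ≤ ∫⁻ q, ENNReal.ofReal (ε ^ (-(1:ℝ)/4)) *
            (ENNReal.ofReal (M q.1)⁻¹ ^ ((1:ℝ)/2) *
              ENNReal.ofReal (M q.1 * Δη q.2 q.1) ^ ((1:ℝ)/2)) ∂ν := lintegral_mono hpt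
      _ = ENNReal.ofReal (ε ^ (-(1:ℝ)/4)) *
            ∫⁻ q, ENNReal.ofReal (M q.1)⁻¹ ^ ((1:ℝ)/2) *
              ENNReal.ofReal (M q.1 * Δη q.2 q.1) ^ ((1:ℝ)/2) ∂ν :=
          lintegral_const_mul _ (hf2m.mul hg2m)
      _ ≤ _ := mul_le_mul_right hHolder1 _
  -- main Hölder (4/3, 4)
  set F : Ω × ℝ → ENNReal := fun q => ENNReal.ofReal (φ q.2 q.1) ^ ((3:ℝ)/2) with hF
  have hFm : Measurable F := hφm'.ennreal_ofReal.pow_const _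
  have hconj43 : Real.HolderConjugate (4/3) 4 := Real.holderConjugate_iff.mpr ⟨by norm_num, by norm_num⟩
  have hmain : ∫⁻ q, F q * ind q ∂ν
      ≤ ENNReal.ofReal C₁ ^ ((3:ℝ)/4) * (∫⁻ q, ind q ∂ν) ^ ((1:ℝ)/4) := by
    have h := ENNReal.lintegral_mul_le_Lp_mul_Lq ν hconj43 hFm.aemeasurable hindm.aemeasurable
    simp only [Pi.mul_apply] at h
    have hFq : ∀ q, F q ^ ((4:ℝ)/3) = ENNReal.ofReal (φ q.2 q.1 ^ (2:ℕ)) := by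
      intro q
      rw [hF, ← ENNReal.rpow_mul, show (3:ℝ)/2 * (4/3) = (2:ℝ) by norm_num,
        ENNReal.ofReal_rpow_of_nonneg (hφ0 _ _) (by norm_num),
        show (2:ℝ) = ((2:ℕ):ℝ) by norm_num, Real.rpow_natCast]
    have hInd4 : ∀ q, ind q ^ (4:ℝ) = ind q := by
      intro q; rw [hind]
      by_cases hq : q ∈ Aset
      · simp [Set.indicator_of_mem hq]
      · simp [Set.indicator_of_notMem hq, ENNReal.zero_rpow_of_pos]
    rw [show (1:ℝ)/((4:ℝ)/3) = (3:ℝ)/4 by norm_num] at h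
    simp only [hFq, hInd4] at h
    refine h.trans ?_
    gcongr
  -- combine everything in ENNReal
  have hfinal : ∫⁻ q, F q * ind q ∂ν
      ≤ ENNReal.ofReal (C₁ ^ ((3:ℝ)/4) * (T * C₀) ^ ((1:ℝ)/8) * ε ^ ((1:ℝ)/16)) := by
    calc ∫⁻ q, F q * ind q ∂ν
        ≤ ENNReal.ofReal C₁ ^ ((3:ℝ)/4) * (∫⁻ q, ind q ∂ν) ^ ((1:ℝ)/4) := hmain
      _ ≤ ENNReal.ofReal C₁ ^ ((3:ℝ)/4) *
          (ENNReal.ofReal (ε ^ (-(1:ℝ)/4)) *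
            (ENNReal.ofReal (T * C₀) ^ ((1:ℝ)/2) * ENNReal.ofReal ε ^ ((1:ℝ)/2))) ^ ((1:ℝ)/4) := by
          exact mul_le_mul_right (ENNReal.rpow_le_rpow hindLe (by norm_num)) _
      _ = ENNReal.ofReal (C₁ ^ ((3:ℝ)/4)) *
          ENNReal.ofReal ((ε ^ (-(1:ℝ)/4) *
            ((T * C₀) ^ ((1:ℝ)/2) * ε ^ ((1:ℝ)/2))) ^ ((1:ℝ)/4)) := by
          rw [ENNReal.ofReal_rpow_of_nonneg hC₁ (by norm_num),
            ENNReal.ofReal_rpow_of_nonneg (mul_nonneg hTle hC₀) (by norm_num),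
            ENNReal.ofReal_rpow_of_nonneg hε.le (by norm_num),
            ← ENNReal.ofReal_mul (by positivity), ← ENNReal.ofReal_mul (by positivity),
            ENNReal.ofReal_rpow_of_nonneg (by positivity) (by norm_num)]
      _ = ENNReal.ofReal (C₁ ^ ((3:ℝ)/4) * (T * C₀) ^ ((1:ℝ)/8) * ε ^ ((1:ℝ)/16)) := by
          rw [← ENNReal.ofReal_mul (by positivity)]
          congr 1
          have e1 : ε ^ (-(1:ℝ)/4) * ((T * C₀) ^ ((1:ℝ)/2) * ε ^ ((1:ℝ)/2))
              = (T * C₀) ^ ((1:ℝ)/2) * ε ^ ((1:ℝ)/4) := by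
            rw [mul_comm ((T * C₀) ^ ((1:ℝ)/2)) (ε ^ ((1:ℝ)/2)), ← mul_assoc,
              ← Real.rpow_add hε, show -(1:ℝ)/4 + 1/2 = (1:ℝ)/4 by norm_num, mul_comm]
          rw [e1, Real.mul_rpow (by positivity) (by positivity),
            ← Real.rpow_mul (mul_nonneg hTle hC₀), ← Real.rpow_mul hε.le,
            show (1:ℝ)/2 * (1/4) = (1:ℝ)/8 by norm_num,
            show (1:ℝ)/4 * (1/4) = (1:ℝ)/16 by norm_num, mul_assoc]
  have hfin : (∫⁻ q, F q * ind q ∂ν) ≠ ⊤ :=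
    (lt_of_le_of_lt hfinal ENNReal.ofReal_lt_top).ne
  -- measurability of the integrand of the conclusion
  have hnn : ∀ t ω, (0:ℝ) ≤ (if Real.sqrt ε < Δη t ω then φ t ω ^ ((3:ℝ)/2) else 0) := by
    intro t ω; split_ifs
    · exact Real.rpow_nonneg (hφ0 _ _) _
    · exact le_rfl
  have hHjm : Measurable (fun q : ℝ × Ω =>
      (if Real.sqrt ε < Δη q.1 q.2 then φ q.1 q.2 ^ ((3:ℝ)/2) else 0)) :=
    Measurable.ite (measurableSet_lt measurable_const hΔm) (hφm.pow measurable_const) measurable_const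
  -- relate the real integrand to F * ind
  have hH : ∀ (ω : Ω) (t : ℝ),
      ENNReal.ofReal (if Real.sqrt ε < Δη t ω then φ t ω ^ ((3:ℝ)/2) else 0)
        = F (ω, t) * ind (ω, t) := by
    intro ω t
    by_cases hc : Real.sqrt ε < Δη t ω
    · rw [if_pos hc, hind, Set.indicator_of_mem (show (ω, t) ∈ Aset from hc), mul_one]
      simp only [hF]
      rw [ENNReal.ofReal_rpow_of_nonneg (hφ0 _ _) (by norm_num)]
    · rw [if_neg hc, hind, Set.indicator_of_notMem (show (ω, t) ∉ Aset from hc), mul_zero,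
        ENNReal.ofReal_zero]
  set G : Ω → ENNReal := fun ω => ∫⁻ t in S,
      ENNReal.ofReal (if Real.sqrt ε < Δη t ω then φ t ω ^ ((3:ℝ)/2) else 0) with hG
  have hGm : Measurable G := by
    apply Measurable.lintegral_prod_right (f := fun ω t =>
      ENNReal.ofReal (if Real.sqrt ε < Δη t ω then φ t ω ^ ((3:ℝ)/2) else 0))
    exact ((hHjm.comp measurable_swap).ennreal_ofReal)
  have hGTGT : ∫⁻ ω, G ω ∂μ = ∫⁻ q, F q * ind q ∂ν := by
    rw [hν, lintegral_prod (fun q => F q * ind q) ((hFm.mul hindm).aemeasurable)]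
    exact lintegral_congr fun ω => lintegral_congr fun t => hH ω t
  -- the final chain of real inequalities
  have hg : ∀ ω : Ω, (∫ t in (0:ℝ)..T,
      (if Real.sqrt ε < Δη t ω then φ t ω ^ ((3:ℝ)/2) else 0)) = (G ω).toReal := by
    intro ω
    rw [intervalIntegral.integral_of_le hTle,
      integral_eq_lintegral_of_nonneg_ae (Filter.Eventually.of_forall fun t => hnn t ω)
        ((hHjm.comp (measurable_id.prodMk measurable_const)).aestronglyMeasurable)]
  calc (∫ ω, (∫ t in (0:ℝ)..T,
        (if Real.sqrt ε < Δη t ω then φ t ω ^ ((3:ℝ)/2) else 0)) ∂μ)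
      = ∫ ω, (G ω).toReal ∂μ := integral_congr_ae (Filter.Eventually.of_forall hg)
    _ = (∫⁻ ω, ENNReal.ofReal (G ω).toReal ∂μ).toReal :=
        integral_eq_lintegral_of_nonneg_ae
          (Filter.Eventually.of_forall fun ω => ENNReal.toReal_nonneg)
          (ENNReal.measurable_toReal.comp hGm).aestronglyMeasurable
    _ ≤ (∫⁻ q, F q * ind q ∂ν).toReal := by
        apply ENNReal.toReal_mono hfin
        calc ∫⁻ ω, ENNReal.ofReal (G ω).toReal ∂μ
            ≤ ∫⁻ ω, G ω ∂μ := lintegral_mono fun ω => ENNReal.ofReal_toReal_le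
          _ = _ := hGTGT
    _ ≤ (ENNReal.ofReal (C₁ ^ ((3:ℝ)/4) * (T * C₀) ^ ((1:ℝ)/8) * ε ^ ((1:ℝ)/16))).toReal :=
        ENNReal.toReal_mono ENNReal.ofReal_ne_top hfinal
    _ = C₁ ^ ((3:ℝ)/4) * (T * C₀) ^ ((1:ℝ)/8) * ε ^ ((1:ℝ)/16) :=
        ENNReal.toReal_ofReal (by positivity)
    _ ≤ C₁ ^ ((3:ℝ)/4) * (T * C₀) ^ ((1:ℝ)/8) * ε ^ ((1:ℝ)/16) := le_rfl
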